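/- For every complex number k with Re k > 0 and Im k > 0 and all real t ≥ 0, |e^{-√(-k)·t} − e^{-√k·t}| ≤ √2, where square roots are principal. -/

import Mathlib

open Complex

lemma aux_neg_cos_le_sinh (s : ℝ) (hs : 0 ≤ s) : -Real.cos s ≤ Real.sinh s := by
  rcases le_total s (Real.pi / 2) with h | h
  · have h1 : 0 ≤ Real.cos s :=
      Real.cos_nonneg_of_mem_Icc ⟨by linarith [Real.pi_pos], h⟩
    have h2 : 0 ≤ Real.sinh s := Real.sinh_nonneg_iff.mpr hs
    linarith
  · have h4 : s ≤ Real.sinh s := Real.self_le_sinh_iff.mpr hs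
    have h5 : -Real.cos s ≤ 1 := by linarith [Real.neg_one_le_cos s]
    have h6 : (1:ℝ) ≤ Real.pi / 2 := by linarith [Real.pi_gt_three]
    linarith

lemma aux_key (p q : ℝ) (hp : 0 ≤ p) (hq : 0 ≤ q) :
    Real.exp (-(2*q)) + Real.exp (-(2*p))
      - 2 * Real.exp (-(p+q)) * Real.cos (p+q) ≤ 2 := by
  set s := p + q with hsdef
  have hs : 0 ≤ s := by positivity
  have h1 : Real.exp (-(2*q)) + Real.exp (-(2*p))
      = 2 * Real.exp (-s) * Real.cosh (p - q) := by
    rw [Real.cosh_eq]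
    have e1 : Real.exp (-s) * Real.exp (p - q) = Real.exp (-(2*q)) := by
      rw [← Real.exp_add, hsdef]; ring_nf
    have e2 : Real.exp (-s) * Real.exp (-(p - q)) = Real.exp (-(2*p)) := by
      rw [← Real.exp_add, hsdef]; ring_nf
    nlinarith [e1, e2]
  rw [h1]
  have h2 : Real.cosh (p - q) ≤ Real.cosh s := by
    rw [Real.cosh_le_cosh, _root_.abs_of_nonneg hs]
    exact abs_le.mpr ⟨by linarith, by linarith⟩
  have h3 : -Real.cos s ≤ Real.sinh s := aux_neg_cos_le_sinh s hs
  have h4 : Real.cosh s - Real.cos s ≤ Real.exp s := by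
    rw [Real.cosh_eq]
    rw [Real.sinh_eq] at h3
    linarith
  have h5 : 0 < Real.exp (-s) := Real.exp_pos _
  have h6 : Real.exp (-s) * Real.exp s = 1 := by
    rw [← Real.exp_add]; simp
  have hcos : 0 < Real.cosh (p - q) := Real.cosh_pos _
  calc 2 * Real.exp (-s) * Real.cosh (p - q) - 2 * Real.exp (-s) * Real.cos s
      ≤ 2 * Real.exp (-s) * Real.cosh s - 2 * Real.exp (-s) * Real.cos s := by nlinarith
    _ ≤ 2 * Real.exp (-s) * Real.exp s := by nlinarith
    _ = 2 := by rw [mul_assoc, h6]; ring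

/-- Pointwise estimate used for the Rollnik-class bound: for `k` in the open first
quadrant and `t ≥ 0`, `|e^{−√(−k) t} − e^{−√k t}| ≤ √2`, with principal square roots. -/
theorem green_bound_rollnik (k : ℂ) (hre : 0 < k.re) (him : 0 < k.im) (t : ℝ) (ht : 0 ≤ t) :
    ‖Complex.exp (-((-k) ^ (1 / 2 : ℂ)) * t)
        - Complex.exp (-(k ^ (1 / 2 : ℂ)) * t)‖
      ≤ Real.sqrt 2 := by
  have hk0 : k ≠ 0 := by
    intro h; rw [h] at hre; simp at hre
  -- log(-k) = log k - π I
  have hlogneg : Complex.log (-k) = Complex.log k - Real.pi * I := by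
    apply Complex.ext
    · simp [Complex.log_re]
    · simp [Complex.log_im, Complex.arg_neg_eq_arg_sub_pi_of_im_pos him]
  -- (-k)^(1/2) = -I * k^(1/2)
  have hkey : (-k) ^ (1/2 : ℂ) = -I * k ^ (1/2 : ℂ) := by
    rw [Complex.cpow_def_of_ne_zero (neg_ne_zero.2 hk0),
        Complex.cpow_def_of_ne_zero hk0, hlogneg, sub_mul, Complex.exp_sub]
    have : Complex.exp (Real.pi * I * (1/2)) = I := by
      rw [show (Real.pi : ℂ) * I * (1/2) = Real.pi / 2 * I by ring]
      simp [Complex.exp_mul_I, Complex.cos_pi_div_two, Complex.sin_pi_div_two]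
    rw [this]
    rw [div_eq_mul_inv, Complex.inv_I]
    ring
  set z := k ^ (1/2 : ℂ) with hz
  -- arg k ∈ [0, π/2)
  have harg0 : 0 ≤ Complex.arg k := Complex.arg_nonneg_iff.mpr him.le
  have harg1 : Complex.arg k < Real.pi / 2 :=
    Complex.arg_lt_pi_div_two_iff.mpr (Or.inl hre)
  -- z = exp(log k * (1/2))
  have hzexp : z = Complex.exp (Complex.log k * (1/2)) :=
    Complex.cpow_def_of_ne_zero hk0 _
  have hzre : 0 ≤ z.re := by
    rw [hzexp, Complex.exp_re]
    have : Real.cos ((Complex.log k * (1/2)).im) ≥ 0 := by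
      apply Real.cos_nonneg_of_mem_Icc
      simp only [Complex.mul_im, Complex.log_im, Complex.log_re]
      constructor
      · simp; nlinarith [Real.pi_pos]
      · simp; nlinarith [Real.pi_pos]
    positivity
  have hzim : 0 ≤ z.im := by
    rw [hzexp, Complex.exp_im]
    have : 0 ≤ Real.sin ((Complex.log k * (1/2)).im) := by
      apply Real.sin_nonneg_of_nonneg_of_le_pi
      · simp only [Complex.mul_im, Complex.log_im, Complex.log_re]
        simp; nlinarith
      · simp only [Complex.mul_im, Complex.log_im, Complex.log_re]
        simp; nlinarith [Real.pi_pos]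
    positivity
  set a := z.re
  set b := z.im
  set p := a * t with hp
  set q := b * t with hq
  have hp0 : 0 ≤ p := mul_nonneg hzre ht
  have hq0 : 0 ≤ q := mul_nonneg hzim ht
  -- rewrite the two exponentials
  have hA : -((-k) ^ (1/2 : ℂ)) * t = Complex.mk (-q) p := by
    rw [hkey]
    apply Complex.ext <;>
      simp [Complex.ext_iff, hp, hq, mul_comm, a, b]
  have hB : -(z) * t = Complex.mk (-p) (-q) := by
    apply Complex.ext <;> simp [hp, hq, a, b]
  rw [hA, hB]
  -- compute the norm squared
  rw [Complex.norm_def]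
  apply Real.sqrt_le_sqrt
  rw [Complex.normSq_apply]
  simp only [Complex.sub_re, Complex.sub_im, Complex.exp_re, Complex.exp_im,
    Real.cos_neg, Real.sin_neg]
  have key := aux_key p q hp0 hq0
  have hcos : Real.cos (p + q) = Real.cos p * Real.cos q - Real.sin p * Real.sin q :=
    Real.cos_add p q
  have e1 : Real.exp (-q) * Real.exp (-q) = Real.exp (-(2*q)) := by
    rw [← Real.exp_add]; ring_nf
  have e2 : Real.exp (-p) * Real.exp (-p) = Real.exp (-(2*p)) := by
    rw [← Real.exp_add]; ring_nf
  have e3 : Real.exp (-q) * Real.exp (-p) = Real.exp (-(p+q)) := by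
    rw [← Real.exp_add]; ring_nf
  have hsp := Real.sin_sq_add_cos_sq p
  have hsq := Real.sin_sq_add_cos_sq q
  have heq : (Real.exp (-q) * Real.cos p - Real.exp (-p) * Real.cos q) *
        (Real.exp (-q) * Real.cos p - Real.exp (-p) * Real.cos q) +
      (Real.exp (-q) * Real.sin p - Real.exp (-p) * -Real.sin q) *
        (Real.exp (-q) * Real.sin p - Real.exp (-p) * -Real.sin q)
      = Real.exp (-(2*q)) + Real.exp (-(2*p)) - 2 * Real.exp (-(p+q)) * Real.cos (p+q) := by
    rw [hcos, ← e1, ← e2, ← e3]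
    linear_combination (Real.exp (-q))^2 * hsp + (Real.exp (-p))^2 * hsq
  rw [heq]
  exact key
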